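/- Let f(z) ∈ ℤ[[z]] be a formal power series all of whose coefficients are nonnegative, and let r ≥ 1 be an integer. Then all coefficients of W_f^{(r)}(z) and all coefficients of (−1)^r · W_{−f}^{(r)}(z) are nonnegative integers; that is, m_f(j, r) ≥ 0 and (−1)^r m_{−f}(j, r) ≥ 0 are integers for all j ≥ 0. -/

import Mathlib

open Finset Function

/-! ### Arithmetic lemmas about the Möbius function -/

private lemma sum_moebius' (n : ℕ) :
    ∑ d ∈ n.divisors, (ArithmeticFunction.moebius d : ℤ) = if n = 1 then 1 else 0 := by
  rw [← ArithmeticFunction.coe_mul_zeta_apply, ArithmeticFunction.moebius_mul_coe_zeta,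
    ArithmeticFunction.one_apply]

private lemma odd_of_dvd' {m n : ℕ} (h : m ∣ n) (hn : Odd n) : Odd m := by
  obtain ⟨k, rfl⟩ := h
  exact (Nat.odd_mul.mp hn).1

private lemma moebius_two' : (ArithmeticFunction.moebius 2 : ℤ) = -1 :=
  ArithmeticFunction.moebius_apply_prime Nat.prime_two

private lemma filter_divisors' (r p : ℕ) (hr : r ≠ 0) (hp : p ∣ r) :
    r.divisors.filter (fun d => p ∣ r / d) = (r / p).divisors := by
  have hp0 : p ≠ 0 := by rintro rfl; exact hr (zero_dvd_iff.mp hp)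
  ext d
  simp only [Finset.mem_filter, Nat.mem_divisors]
  constructor
  · rintro ⟨⟨hd, -⟩, hpd⟩
    refine ⟨?_, ?_⟩
    · rw [Nat.dvd_div_iff_mul_dvd hp]
      rw [Nat.dvd_div_iff_mul_dvd hd] at hpd
      rwa [mul_comm]
    · have h1 : p ≤ r := Nat.le_of_dvd (Nat.pos_of_ne_zero hr) hp
      have h2 : 0 < r / p := Nat.div_pos h1 (Nat.pos_of_ne_zero hp0)
      omega
  · rintro ⟨hd, -⟩
    have hdr : d ∣ r := hd.trans (Nat.div_dvd_of_dvd hp)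
    refine ⟨⟨hdr, hr⟩, ?_⟩
    rw [Nat.dvd_div_iff_mul_dvd hdr, mul_comm]
    exact (Nat.dvd_div_iff_mul_dvd hp).mp hd

private lemma H_eval' (n : ℕ) (hn : n ≠ 0) :
    ∑ d ∈ n.divisors, (ArithmeticFunction.moebius d : ℤ) * (-1) ^ (n / d) =
      if n = 1 then -1 else if n = 2 then 2 else 0 := by
  rcases Nat.even_or_odd n with he | ho
  · -- even case
    have key : ∀ d ∈ n.divisors, (ArithmeticFunction.moebius d : ℤ) * (-1) ^ (n / d)
        = (ArithmeticFunction.moebius d : ℤ)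
          - 2 * (if Odd (n / d) then (ArithmeticFunction.moebius d : ℤ) else 0) := by
      intro d _
      by_cases h : Odd (n / d)
      · rw [if_pos h, h.neg_one_pow]; ring
      · rw [if_neg h, (Nat.not_odd_iff_even.mp h).neg_one_pow]; ring
    rw [Finset.sum_congr rfl key, Finset.sum_sub_distrib, ← Finset.mul_sum, sum_moebius' n,
      ← Finset.sum_filter]
    have hn1 : n ≠ 1 := by rintro rfl; exact Nat.not_even_one he
    rw [if_neg hn1]
    by_cases h4 : 4 ∣ n
    · have hz : ∀ d ∈ n.divisors.filter (fun d => Odd (n / d)),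
          (ArithmeticFunction.moebius d : ℤ) = 0 := by
        intro d hd
        obtain ⟨hd', hodd⟩ := Finset.mem_filter.mp hd
        obtain ⟨hdvd, -⟩ := Nat.mem_divisors.mp hd'
        have hcop : Nat.Coprime 4 (n / d) := by
          have h2 : ¬ (2 ∣ n / d) := by
            rw [Nat.odd_iff] at hodd; omega
          have hc2 : Nat.Coprime 2 (n / d) := (Nat.Prime.coprime_iff_not_dvd Nat.prime_two).mpr h2
          exact (show (4:ℕ) = 2 ^ 2 by norm_num) ▸ hc2.pow_left 2
        have h4d : (4:ℕ) ∣ d := by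
          have hmm : (4:ℕ) ∣ d * (n / d) := by rwa [Nat.mul_div_cancel' hdvd]
          exact hcop.dvd_of_dvd_mul_right hmm
        have hns : ¬ Squarefree d := by
          intro hs
          have h22 := hs 2 (by omega)
          simp [Nat.isUnit_iff] at h22
        simp [ArithmeticFunction.moebius_eq_zero_of_not_squarefree hns]
      rw [Finset.sum_eq_zero hz]
      have hn2 : n ≠ 2 := by rintro rfl; omega
      simp [hn1, hn2]
    · obtain ⟨m, hm⟩ : 2 ∣ n := he.two_dvd
      have hm0 : m ≠ 0 := by rintro rfl; omega
      have hmodd : Odd m := by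
        rcases Nat.even_or_odd m with hme | hmo
        · exfalso; apply h4; obtain ⟨t, ht⟩ := hme; omega
        · exact hmo
      have hre : ∑ d ∈ n.divisors.filter (fun d => Odd (n / d)),
          (ArithmeticFunction.moebius d : ℤ)
          = ∑ d' ∈ m.divisors, (ArithmeticFunction.moebius (2 * d') : ℤ) := by
        have h2d : ∀ d ∈ n.divisors.filter (fun d => Odd (n / d)), 2 ∣ d := by
          intro d hd
          obtain ⟨hd', hodd⟩ := Finset.mem_filter.mp hd
          obtain ⟨hdvd, -⟩ := Nat.mem_divisors.mp hd'
          by_contra h2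
          have hdo : Nat.Coprime d 2 := by
            rw [Nat.coprime_comm]
            exact (Nat.Prime.coprime_iff_not_dvd Nat.prime_two).mpr h2
          have hdm : d ∣ m := hdo.dvd_of_dvd_mul_left (by rwa [← hm])
          have hx : n / d = 2 * (m / d) := by
            rw [hm, Nat.mul_div_assoc 2 hdm]
          rw [hx] at hodd
          exact (Nat.not_odd_iff_even.mpr (even_two_mul _)) hodd
        refine Finset.sum_nbij' (fun d => d / 2) (fun d' => 2 * d') ?_ ?_ ?_ ?_ ?_
        · intro d hd
          obtain ⟨hd', hodd⟩ := Finset.mem_filter.mp hd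
          obtain ⟨hdvd, -⟩ := Nat.mem_divisors.mp hd'
          rw [Nat.mem_divisors]
          refine ⟨?_, hm0⟩
          have hin : 2 * (d / 2) ∣ 2 * m := by
            rw [Nat.mul_div_cancel' (h2d d hd), ← hm]; exact hdvd
          exact (mul_dvd_mul_iff_left (two_ne_zero)).mp hin
        · intro d' hd'
          obtain ⟨hdvd, -⟩ := Nat.mem_divisors.mp hd'
          rw [Finset.mem_filter, Nat.mem_divisors]
          have h1 : 2 * d' ∣ n := by rw [hm]; exact mul_dvd_mul_left 2 hdvd
          refine ⟨⟨h1, hn⟩, ?_⟩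
          have hx : n / (2 * d') = m / d' := by
            rw [hm, Nat.mul_div_mul_left _ _ (by norm_num)]
          rw [hx]
          exact odd_of_dvd' (Nat.div_dvd_of_dvd hdvd) hmodd
        · intro d hd
          exact Nat.mul_div_cancel' (h2d d hd)
        · intro d' _
          exact Nat.mul_div_cancel_left _ (by norm_num)
        · intro d hd
          rw [Nat.mul_div_cancel' (h2d d hd)]
      rw [hre]
      have hterm : ∀ d' ∈ m.divisors, (ArithmeticFunction.moebius (2 * d') : ℤ)
          = -(ArithmeticFunction.moebius d' : ℤ) := by
        intro d' hd'
        obtain ⟨hdvd, -⟩ := Nat.mem_divisors.mp hd'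
        have hodd : Odd d' := odd_of_dvd' hdvd hmodd
        have hcop : Nat.Coprime 2 d' := by
          refine (Nat.Prime.coprime_iff_not_dvd Nat.prime_two).mpr ?_
          rw [Nat.odd_iff] at hodd; omega
        rw [ArithmeticFunction.isMultiplicative_moebius.map_mul_of_coprime hcop, moebius_two']
        ring
      rw [Finset.sum_congr rfl hterm, Finset.sum_neg_distrib, sum_moebius' m]
      rcases eq_or_ne m 1 with rfl | hm1
      · have hn2' : n = 2 := by omega
        rw [hn2']
        norm_num
      · have h2' : n ≠ 2 := by omega
        simp [hn1, h2', hm1]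
  · -- odd case
    have h1 : ∀ d ∈ n.divisors, (ArithmeticFunction.moebius d : ℤ) * (-1) ^ (n / d)
        = -(ArithmeticFunction.moebius d : ℤ) := by
      intro d hd
      have hdd : d ∣ n := (Nat.mem_divisors.mp hd).1
      have hodd : Odd (n / d) := odd_of_dvd' (Nat.div_dvd_of_dvd hdd) ho
      rw [hodd.neg_one_pow]; ring
    rw [Finset.sum_congr rfl h1, Finset.sum_neg_distrib, sum_moebius' n]
    have hn2 : n ≠ 2 := by rintro rfl; rw [Nat.odd_iff] at ho; omega
    rcases eq_or_ne n 1 with rfl | hne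
    · norm_num
    · simp [hne, hn2]

private lemma gval' (p n : ℕ) (hn : n ≠ 0) :
    ∑ d ∈ n.divisors, (ArithmeticFunction.moebius d : ℤ) * (-1) ^ (p * n + p * (n / d)) =
      (if n = 1 then 1 else 0) + (if n = 2 ∧ Odd p then 2 else 0) := by
  rcases Nat.even_or_odd p with hpe | hpo
  · have hc : ∀ d ∈ n.divisors, (ArithmeticFunction.moebius d : ℤ) * (-1) ^ (p * n + p * (n / d))
        = (ArithmeticFunction.moebius d : ℤ) := by
      intro d _
      have hev : Even (p * n + p * (n / d)) := (hpe.mul_right n).add (hpe.mul_right (n / d))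
      rw [hev.neg_one_pow, mul_one]
    rw [Finset.sum_congr rfl hc, sum_moebius']
    have hno : ¬ (n = 2 ∧ Odd p) := fun h => (Nat.not_odd_iff_even.mpr hpe) h.2
    simp [hno]
  · have step : ∀ d ∈ n.divisors, (ArithmeticFunction.moebius d : ℤ) * (-1) ^ (p * n + p * (n / d))
        = (-1) ^ n * ((ArithmeticFunction.moebius d : ℤ) * (-1) ^ (n / d)) := by
      intro d _
      rw [pow_add, pow_mul, pow_mul, hpo.neg_one_pow]
      ring
    rw [Finset.sum_congr rfl step, ← Finset.mul_sum, H_eval' n hn]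
    rcases eq_or_ne n 1 with rfl | h1
    · norm_num
    rcases eq_or_ne n 2 with rfl | h2
    · norm_num [hpo]
    · simp [h1, h2]

private lemma cond_iff' (p r : ℕ) (hpd : p ∣ r) (hpp : 0 < p) (h42 : r % 4 = 2) :
    (r / p = 2 ∧ Odd p) ↔ p = r / 2 := by
  have hmul : p * (r / p) = r := Nat.mul_div_cancel' hpd
  constructor
  · rintro ⟨h2', -⟩
    rw [h2'] at hmul
    omega
  · intro hp2
    have hr2 : r = 2 * p := by omega
    have hdiv : r / p = 2 := by
      rw [hr2, mul_comm 2 p]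
      exact Nat.mul_div_cancel_left 2 hpp
    exact ⟨hdiv, Nat.odd_iff.mpr (by omega)⟩

private lemma card_filter_int {α : Type} [Fintype α] (P Q : α → Prop)
    [DecidablePred P] [DecidablePred Q] :
    (((Finset.univ.filter fun w => P w ∧ Q w).card : ℤ))
      = ∑ w ∈ Finset.univ.filter (fun w => Q w), (if P w then (1:ℤ) else 0) := by
  rw [← Finset.sum_filter, Finset.filter_filter, Finset.sum_const, nsmul_eq_mul, mul_one]
  congr 1
  refine congrArg Finset.card ?_
  apply Finset.filter_congr
  intro w _
  exact and_comm

/-! ### Counting words over a weighted alphabet -/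

section Counting

variable (a : ℕ → ℕ) (j : ℕ)

/-- Letters of weight `i ≤ j`: there are `a i` letters of weight `i`. -/
private abbrev Lt := Σ i : Fin (j + 1), Fin (a i)

private def wgt (l : Lt a j) : ℕ := (l.1 : ℕ)

private def wsum {ι : Type} [Fintype ι] (w : ι → Lt a j) : ℕ := ∑ x, wgt a j (w x)

/-- Number of words of length `m` of total weight `i`. -/
private def Ncnt (m i : ℕ) : ℕ :=
  (Finset.univ.filter fun w : Fin m → Lt a j => wsum a j w = i).card

private lemma card_letters (q : ℕ) (hq : q ≤ j) :
    (Finset.univ.filter fun l : Lt a j => wgt a j l = q).card = a q := by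
  rw [Finset.card_filter, ← Finset.univ_sigma_univ, Finset.sum_sigma]
  have hstep : ∀ i : Fin (j + 1),
      (∑ x ∈ (Finset.univ : Finset (Fin (a i))), if wgt a j ⟨i, x⟩ = q then (1:ℕ) else 0)
        = if i = (⟨q, by omega⟩ : Fin (j + 1)) then a (i : ℕ) else 0 := by
    intro i
    by_cases h : (i : ℕ) = q
    · rcases i with ⟨iv, hiv⟩
      have h' : iv = q := h
      subst h'
      simp [wgt]
    · have hi : i ≠ (⟨q, by omega⟩ : Fin (j + 1)) := by
        intro hh; exact h (by rw [hh])
      simp [wgt, h, hi]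
  rw [Finset.sum_congr rfl (fun i _ => hstep i), Finset.sum_ite_eq' Finset.univ _ _]
  simp

private lemma Ncnt_succ (m i : ℕ) (hi : i ≤ j) :
    Ncnt a j (m + 1) i = ∑ pq ∈ Finset.HasAntidiagonal.antidiagonal i, Ncnt a j m pq.1 * a pq.2 := by
  classical
  have hmap : ∀ w ∈ (Finset.univ.filter fun w : Fin (m + 1) → Lt a j => wsum a j w = i),
      ((wsum a j (fun x : Fin m => w x.succ)), wgt a j (w 0)) ∈ Finset.HasAntidiagonal.antidiagonal i := by
    intro w hw
    simp only [Finset.mem_filter, Finset.mem_univ, true_and] at hw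
    rw [Finset.HasAntidiagonal.mem_antidiagonal]
    simp only [wsum] at hw ⊢
    rw [Fin.sum_univ_succ] at hw
    omega
  rw [Ncnt, Finset.card_eq_sum_card_fiberwise hmap]
  refine Finset.sum_congr rfl fun pq hpq => ?_
  have hmem := Finset.HasAntidiagonal.mem_antidiagonal.mp hpq
  have hq : pq.2 ≤ j := by omega
  have hfib : ((Finset.univ.filter fun w : Fin (m + 1) → Lt a j => wsum a j w = i).filter
      (fun w => ((wsum a j (fun x : Fin m => w x.succ)), wgt a j (w 0)) = pq))
      = (Finset.univ.filter fun w : Fin (m + 1) → Lt a j =>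
          wsum a j (fun x : Fin m => w x.succ) = pq.1 ∧ wgt a j (w 0) = pq.2) := by
    ext w
    simp only [Finset.mem_filter, Finset.mem_univ, true_and]
    constructor
    · rintro ⟨-, heq⟩
      exact ⟨congrArg Prod.fst heq, congrArg Prod.snd heq⟩
    · rintro ⟨h1, h2⟩
      refine ⟨?_, ?_⟩
      · simp only [wsum] at h1 ⊢
        rw [Fin.sum_univ_succ]
        omega
      · rw [h1, h2]
  rw [hfib]
  rw [show (Ncnt a j m pq.1 * a pq.2)
      = ((Finset.univ.filter fun v : Fin m → Lt a j => wsum a j v = pq.1) ×ˢ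
         (Finset.univ.filter fun l : Lt a j => wgt a j l = pq.2)).card by
    rw [Finset.card_product, Ncnt, card_letters a j pq.2 hq]]
  apply Finset.card_bij' (i := fun w _ => ((fun x : Fin m => w x.succ), w 0))
    (j := fun vl _ => Fin.cons vl.2 vl.1)
  · intro w hw
    simp only [Finset.mem_filter, Finset.mem_univ, true_and] at hw
    simp only [Finset.mem_product, Finset.mem_filter, Finset.mem_univ, true_and]
    exact hw
  · intro vl hvl
    simp only [Finset.mem_product, Finset.mem_filter, Finset.mem_univ, true_and] at hvl
    simp only [Finset.mem_filter, Finset.mem_univ, true_and]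
    constructor
    · have hx : (fun x : Fin m => (Fin.cons vl.2 vl.1 : Fin (m+1) → Lt a j) x.succ) = vl.1 := by
        funext x; simp [Fin.cons_succ]
      rw [hx]; exact hvl.1
    · simp only [Fin.cons_zero]; exact hvl.2
  · intro w _
    exact Fin.cons_self_tail w
  · intro vl _
    apply Prod.ext
    · funext x; simp [Fin.cons_succ]
    · simp [Fin.cons_zero]

private lemma countF (f : PowerSeries ℚ) (ha : ∀ i, PowerSeries.coeff i f = a i) :
    ∀ m i, i ≤ j → PowerSeries.coeff i (f ^ m) = (Ncnt a j m i : ℚ) := by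
  intro m
  induction m with
  | zero =>
    intro i hi
    rw [pow_zero, PowerSeries.coeff_one]
    have hN : Ncnt a j 0 i = if i = 0 then 1 else 0 := by
      rw [Ncnt]
      rcases eq_or_ne i 0 with rfl | h0
      · rw [if_pos rfl]
        have hz : ∀ w : Fin 0 → Lt a j, wsum a j w = 0 := by
          intro w; simp [wsum]
        rw [Finset.filter_true_of_mem (fun w _ => hz w)]
        simp [Finset.card_univ]
      · rw [if_neg h0]
        rw [Finset.filter_false_of_mem, Finset.card_empty]
        intro w _
        simp only [wsum]
        simpa using fun h => h0 h.symm
    rw [hN]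
    split <;> simp
  | succ m ih =>
    intro i hi
    rw [pow_succ, PowerSeries.coeff_mul, Ncnt_succ a j m i hi]
    push_cast
    refine Finset.sum_congr rfl fun pq hpq => ?_
    have hmem := Finset.HasAntidiagonal.mem_antidiagonal.mp hpq
    rw [ih pq.1 (by omega), ha pq.2]

end Counting

/-! ### Words on `ZMod r` and the shift action -/

section Words

variable (a : ℕ → ℕ) (j r : ℕ) [NeZero r]

private def shf (w : ZMod r → Lt a j) : ZMod r → Lt a j := fun x => w (x + 1)

private lemma shf_iter (k : ℕ) (w : ZMod r → Lt a j) (x : ZMod r) :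
    (shf a j r)^[k] w x = w (x + (k : ZMod r)) := by
  induction k generalizing w x with
  | zero => simp
  | succ k ih =>
    rw [Function.iterate_succ_apply, ih (shf a j r w) x]
    simp only [shf]
    push_cast
    ring_nf

private lemma shf_pow_r (w : ZMod r → Lt a j) : (shf a j r)^[r] w = w := by
  funext x
  rw [shf_iter, ZMod.natCast_self, add_zero]

private lemma mem_pp (w : ZMod r → Lt a j) : w ∈ periodicPts (shf a j r) := by
  rw [Function.mem_periodicPts]
  exact ⟨r, Nat.pos_of_ne_zero (NeZero.ne r), shf_pow_r a j r w⟩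

private lemma per_dvd (w : ZMod r → Lt a j) : minimalPeriod (shf a j r) w ∣ r :=
  Function.IsPeriodicPt.minimalPeriod_dvd (shf_pow_r a j r w)

private lemma per_pos (w : ZMod r → Lt a j) : 0 < minimalPeriod (shf a j r) w :=
  Function.minimalPeriod_pos_of_mem_periodicPts (mem_pp a j r w)

private lemma fixed_iff (e : ℕ) (w : ZMod r → Lt a j) :
    (shf a j r)^[e] w = w ↔ minimalPeriod (shf a j r) w ∣ e :=
  Function.isPeriodicPt_iff_minimalPeriod_dvd

private lemma shf_injective : Function.Injective (shf a j r) := by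
  intro w w' h
  funext y
  have hy := congrFun h (y - 1)
  simpa [shf, sub_add_cancel] using hy

private lemma wsum_shf (w : ZMod r → Lt a j) : wsum a j (shf a j r w) = wsum a j w := by
  simp only [wsum, shf]
  exact Fintype.sum_equiv (Equiv.addRight (1 : ZMod r)) _ _ (fun x => rfl)

private lemma wsum_shf_iter (k : ℕ) (w : ZMod r → Lt a j) :
    wsum a j ((shf a j r)^[k] w) = wsum a j w := by
  induction k generalizing w with
  | zero => simp
  | succ k ih =>
    rw [Function.iterate_succ_apply, ih (shf a j r w), wsum_shf]

/-- Number of weight-`j` words fixed by the `e`-th power of the shift. -/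
private noncomputable def Fixc (e : ℕ) : ℕ :=
  (Finset.univ.filter fun w : ZMod r → Lt a j =>
    (shf a j r)^[e] w = w ∧ wsum a j w = j).card

/-- Number of weight-`j` words with minimal period exactly `e`. -/
private noncomputable def Qc (e : ℕ) : ℕ :=
  (Finset.univ.filter fun w : ZMod r → Lt a j =>
    minimalPeriod (shf a j r) w = e ∧ wsum a j w = j).card

private lemma Fixc_sum (e : ℕ) :
    (Fixc a j r e : ℤ) = ∑ w ∈ Finset.univ.filter (fun w : ZMod r → Lt a j => wsum a j w = j),
      (if minimalPeriod (shf a j r) w ∣ e then (1:ℤ) else 0) := by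
  rw [show Fixc a j r e = (Finset.univ.filter fun w : ZMod r → Lt a j =>
      (shf a j r)^[e] w = w ∧ wsum a j w = j).card from rfl]
  rw [card_filter_int]
  refine Finset.sum_congr rfl fun w _ => ?_
  rw [if_congr (fixed_iff a j r e w) rfl rfl]

private lemma Qc_sum (e : ℕ) :
    (Qc a j r e : ℤ) = ∑ w ∈ Finset.univ.filter (fun w : ZMod r → Lt a j => wsum a j w = j),
      (if minimalPeriod (shf a j r) w = e then (1:ℤ) else 0) := by
  rw [show Qc a j r e = (Finset.univ.filter fun w : ZMod r → Lt a j =>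
      minimalPeriod (shf a j r) w = e ∧ wsum a j w = j).card from rfl]
  rw [card_filter_int]

private lemma key1 (hr : r ≠ 0) :
    ∑ d ∈ r.divisors, (ArithmeticFunction.moebius d : ℤ) * (Fixc a j r (r / d) : ℤ)
      = (Qc a j r r : ℤ) := by
  have h1 : ∀ d ∈ r.divisors, (ArithmeticFunction.moebius d : ℤ) * (Fixc a j r (r / d) : ℤ)
      = ∑ w ∈ Finset.univ.filter (fun w : ZMod r → Lt a j => wsum a j w = j),
        (if minimalPeriod (shf a j r) w ∣ r / d
          then (ArithmeticFunction.moebius d : ℤ) else 0) := by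
    intro d _
    rw [Fixc_sum, Finset.mul_sum]
    exact Finset.sum_congr rfl fun w _ => by rw [mul_ite, mul_one, mul_zero]
  rw [Finset.sum_congr rfl h1, Finset.sum_comm, Qc_sum]
  refine Finset.sum_congr rfl fun w _ => ?_
  have hpd : minimalPeriod (shf a j r) w ∣ r := per_dvd a j r w
  have hin : ∑ d ∈ r.divisors, (if minimalPeriod (shf a j r) w ∣ r / d
        then (ArithmeticFunction.moebius d : ℤ) else 0)
      = ∑ d ∈ (r / minimalPeriod (shf a j r) w).divisors, (ArithmeticFunction.moebius d : ℤ) := by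
    rw [← Finset.sum_filter, filter_divisors' r _ hr hpd]
  rw [hin, sum_moebius']
  have hiff : r / minimalPeriod (shf a j r) w = 1 ↔ minimalPeriod (shf a j r) w = r := by
    constructor
    · intro h
      have hmm := Nat.mul_div_cancel' hpd
      rw [h, mul_one] at hmm
      exact hmm
    · intro h
      rw [h]
      exact Nat.div_self (Nat.pos_of_ne_zero hr)
  simp only [hiff]

private lemma key2 (hr : r ≠ 0) :
    ∑ d ∈ r.divisors, (ArithmeticFunction.moebius d : ℤ) * (-1) ^ (r + r / d)
        * (Fixc a j r (r / d) : ℤ)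
      = (Qc a j r r : ℤ) + (if r % 4 = 2 then 2 * (Qc a j r (r / 2) : ℤ) else 0) := by
  have h1 : ∀ d ∈ r.divisors,
      (ArithmeticFunction.moebius d : ℤ) * (-1) ^ (r + r / d) * (Fixc a j r (r / d) : ℤ)
      = ∑ w ∈ Finset.univ.filter (fun w : ZMod r → Lt a j => wsum a j w = j),
        (if minimalPeriod (shf a j r) w ∣ r / d
          then (ArithmeticFunction.moebius d : ℤ) * (-1) ^ (r + r / d) else 0) := by
    intro d _
    rw [Fixc_sum, Finset.mul_sum]
    exact Finset.sum_congr rfl fun w _ => by rw [mul_ite, mul_one, mul_zero]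
  rw [Finset.sum_congr rfl h1, Finset.sum_comm]
  have h2 : ∀ w ∈ Finset.univ.filter (fun w : ZMod r → Lt a j => wsum a j w = j),
      ∑ d ∈ r.divisors, (if minimalPeriod (shf a j r) w ∣ r / d
          then (ArithmeticFunction.moebius d : ℤ) * (-1) ^ (r + r / d) else 0)
      = (if minimalPeriod (shf a j r) w = r then (1:ℤ) else 0)
        + (if r / minimalPeriod (shf a j r) w = 2 ∧ Odd (minimalPeriod (shf a j r) w)
            then (2:ℤ) else 0) := by
    intro w _
    have hpd : minimalPeriod (shf a j r) w ∣ r := per_dvd a j r w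
    have hpp : 0 < minimalPeriod (shf a j r) w := per_pos a j r w
    rw [← Finset.sum_filter, filter_divisors' r _ hr hpd]
    have hn0 : r / minimalPeriod (shf a j r) w ≠ 0 := by
      have h1' : minimalPeriod (shf a j r) w ≤ r := Nat.le_of_dvd (Nat.pos_of_ne_zero hr) hpd
      have h2' : 0 < r / minimalPeriod (shf a j r) w := Nat.div_pos h1' hpp
      omega
    have hexp : ∀ d ∈ (r / minimalPeriod (shf a j r) w).divisors,
        (ArithmeticFunction.moebius d : ℤ) * (-1) ^ (r + r / d)
        = (ArithmeticFunction.moebius d : ℤ)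
            * (-1) ^ (minimalPeriod (shf a j r) w * (r / minimalPeriod (shf a j r) w)
              + minimalPeriod (shf a j r) w * ((r / minimalPeriod (shf a j r) w) / d)) := by
      intro d hd
      obtain ⟨hdvd, -⟩ := Nat.mem_divisors.mp hd
      have e1 : minimalPeriod (shf a j r) w * (r / minimalPeriod (shf a j r) w) = r :=
        Nat.mul_div_cancel' hpd
      have e2 : minimalPeriod (shf a j r) w * ((r / minimalPeriod (shf a j r) w) / d)
          = r / d := by
        rw [← Nat.mul_div_assoc _ hdvd, e1]
      rw [e1, e2]
    rw [Finset.sum_congr rfl hexp, gval' _ _ hn0]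
    have hiff : r / minimalPeriod (shf a j r) w = 1 ↔ minimalPeriod (shf a j r) w = r := by
      constructor
      · intro h
        have hmm := Nat.mul_div_cancel' hpd
        rw [h, mul_one] at hmm
        exact hmm
      · intro h
        rw [h]
        exact Nat.div_self (Nat.pos_of_ne_zero hr)
    simp only [hiff]
  rw [Finset.sum_congr rfl h2, Finset.sum_add_distrib, ← Qc_sum]
  congr 1
  by_cases h42 : r % 4 = 2
  · rw [if_pos h42]
    have hstep : ∀ w ∈ Finset.univ.filter (fun w : ZMod r → Lt a j => wsum a j w = j),
        (if r / minimalPeriod (shf a j r) w = 2 ∧ Odd (minimalPeriod (shf a j r) w)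
          then (2:ℤ) else 0)
        = 2 * (if minimalPeriod (shf a j r) w = r / 2 then (1:ℤ) else 0) := by
      intro w _
      have hpd : minimalPeriod (shf a j r) w ∣ r := per_dvd a j r w
      have hpp : 0 < minimalPeriod (shf a j r) w := per_pos a j r w
      have hcond := cond_iff' (minimalPeriod (shf a j r) w) r hpd hpp h42
      rw [if_congr hcond rfl rfl]
      split <;> ring
    rw [Finset.sum_congr rfl hstep, ← Finset.mul_sum, ← Qc_sum]
  · rw [if_neg h42]
    refine Finset.sum_eq_zero fun w _ => ?_
    rw [if_neg]
    rintro ⟨h2', hodd⟩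
    have hpd : minimalPeriod (shf a j r) w ∣ r := per_dvd a j r w
    have hmul : minimalPeriod (shf a j r) w * (r / minimalPeriod (shf a j r) w) = r :=
      Nat.mul_div_cancel' hpd
    rw [h2'] at hmul
    rw [Nat.odd_iff] at hodd
    omega

private lemma key3 (e : ℕ) : e ∣ Qc a j r e := by
  classical
  have hrpos : 0 < r := Nat.pos_of_ne_zero (NeZero.ne r)
  set S := Finset.univ.filter (fun w : ZMod r → Lt a j =>
    minimalPeriod (shf a j r) w = e ∧ wsum a j w = j) with hS
  set orb : (ZMod r → Lt a j) → Finset (ZMod r → Lt a j) :=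
    fun w => (Finset.range r).image (fun k => (shf a j r)^[k] w) with horb
  have h_orb_shift : ∀ w, orb (shf a j r w) = orb w := by
    intro w
    apply Finset.Subset.antisymm
    · intro x hx
      obtain ⟨k, hk, rfl⟩ := Finset.mem_image.mp hx
      rw [Finset.mem_range] at hk
      rcases Nat.lt_or_ge (k + 1) r with h | h
      · exact Finset.mem_image.mpr ⟨k + 1, Finset.mem_range.mpr h, by
          rw [Function.iterate_succ_apply]⟩
      · have hk1 : k + 1 = r := by omega
        refine Finset.mem_image.mpr ⟨0, Finset.mem_range.mpr hrpos, ?_⟩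
        show (shf a j r)^[0] w = (shf a j r)^[k] (shf a j r w)
        have h1 : (shf a j r)^[k] (shf a j r w) = (shf a j r)^[k + 1] w :=
          (Function.iterate_succ_apply _ _ _).symm
        rw [Function.iterate_zero_apply, h1, hk1, shf_pow_r]
    · intro x hx
      obtain ⟨k, hk, rfl⟩ := Finset.mem_image.mp hx
      rw [Finset.mem_range] at hk
      rcases k with _ | k'
      · refine Finset.mem_image.mpr ⟨r - 1, Finset.mem_range.mpr (by omega), ?_⟩
        show (shf a j r)^[r - 1] (shf a j r w) = (shf a j r)^[0] w
        have hreq : r - 1 + 1 = r := by omega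
        have h1 : (shf a j r)^[r - 1] (shf a j r w) = (shf a j r)^[r - 1 + 1] w :=
          (Function.iterate_succ_apply _ _ _).symm
        rw [Function.iterate_zero_apply, h1, hreq, shf_pow_r]
      · exact Finset.mem_image.mpr ⟨k', Finset.mem_range.mpr (by omega),
          (Function.iterate_succ_apply _ _ _).symm⟩
  have h_orb_iter : ∀ (k : ℕ) w, orb ((shf a j r)^[k] w) = orb w := by
    intro k
    induction k with
    | zero => intro w; rfl
    | succ k ih =>
      intro w
      rw [Function.iterate_succ_apply', h_orb_shift ((shf a j r)^[k] w), ih w]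
  have h_mem : ∀ w, w ∈ orb w := by
    intro w
    exact Finset.mem_image.mpr ⟨0, Finset.mem_range.mpr hrpos, rfl⟩
  have h_sub : ∀ w ∈ S, orb w ⊆ S := by
    intro w hw x hx
    obtain ⟨k, -, rfl⟩ := Finset.mem_image.mp hx
    rw [hS, Finset.mem_filter] at hw ⊢
    refine ⟨Finset.mem_univ _, ?_, ?_⟩
    · rw [Function.minimalPeriod_apply_iterate (mem_pp a j r w) k]
      exact hw.2.1
    · rw [wsum_shf_iter]
      exact hw.2.2
  have h_card : ∀ w ∈ S, (orb w).card = e := by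
    intro w hw
    rw [hS, Finset.mem_filter] at hw
    obtain ⟨-, hper, -⟩ := hw
    have hepos : 0 < e := hper ▸ per_pos a j r w
    have hedvd : e ∣ r := hper ▸ per_dvd a j r w
    have horbe : orb w = (Finset.range e).image (fun k => (shf a j r)^[k] w) := by
      apply Finset.Subset.antisymm
      · intro x hx
        obtain ⟨k, hk, rfl⟩ := Finset.mem_image.mp hx
        refine Finset.mem_image.mpr ⟨k % e, Finset.mem_range.mpr (Nat.mod_lt _ hepos), ?_⟩
        have hk' : k = k % e + e * (k / e) := (Nat.mod_add_div k e).symm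
        conv_rhs => rw [hk']
        rw [Function.iterate_add_apply]
        congr 1
        have hfix : Function.IsPeriodicPt (shf a j r) (e * (k / e)) w := by
          have hbase : Function.IsPeriodicPt (shf a j r) e w := by
            rw [← hper]
            exact Function.isPeriodicPt_minimalPeriod (shf a j r) w
          exact hbase.mul_const (k / e)
        exact hfix.symm
      · apply Finset.image_subset_image
        intro k hk
        rw [Finset.mem_range] at hk ⊢
        exact lt_of_lt_of_le hk (Nat.le_of_dvd hrpos hedvd)
    rw [horbe, Finset.card_image_of_injOn, Finset.card_range]
    intro k1 hk1 k2 hk2 heq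
    have heq' : (shf a j r)^[k1] w = (shf a j r)^[k2] w := heq
    simp only [Finset.coe_range, Set.mem_Iio] at hk1 hk2
    rcases le_total k1 k2 with h | h
    · have hh : (shf a j r)^[k1] ((shf a j r)^[k2 - k1] w) = (shf a j r)^[k1] w := by
        rw [← Function.iterate_add_apply]
        have hks : k1 + (k2 - k1) = k2 := by omega
        rw [hks, heq']
      have hinj : Function.Injective ((shf a j r)^[k1]) := (shf_injective a j r).iterate k1
      have hfix2 : (shf a j r)^[k2 - k1] w = w := hinj hh
      have hdvd' : e ∣ k2 - k1 := by
        rw [← hper]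
        exact Function.IsPeriodicPt.minimalPeriod_dvd hfix2
      have := Nat.eq_zero_of_dvd_of_lt hdvd'
      omega
    · have hh : (shf a j r)^[k2] ((shf a j r)^[k1 - k2] w) = (shf a j r)^[k2] w := by
        rw [← Function.iterate_add_apply]
        have hks : k2 + (k1 - k2) = k1 := by omega
        rw [hks, heq']
      have hinj : Function.Injective ((shf a j r)^[k2]) := (shf_injective a j r).iterate k2
      have hfix2 : (shf a j r)^[k1 - k2] w = w := hinj hh
      have hdvd' : e ∣ k1 - k2 := by
        rw [← hper]
        exact Function.IsPeriodicPt.minimalPeriod_dvd hfix2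
      have := Nat.eq_zero_of_dvd_of_lt hdvd'
      omega
  have hQS : Qc a j r e = S.card := rfl
  rw [hQS]
  rw [Finset.card_eq_sum_card_fiberwise (f := orb) (t := S.image orb)
    (fun w hw => Finset.mem_image_of_mem orb hw)]
  have hfib : ∀ O ∈ S.image orb, (S.filter fun w => orb w = O).card = e := by
    intro O hO
    obtain ⟨w, hw, rfl⟩ := Finset.mem_image.mp hO
    have hset : S.filter (fun x => orb x = orb w) = orb w := by
      ext x
      rw [Finset.mem_filter]
      constructor
      · rintro ⟨hxS, hxO⟩
        exact hxO ▸ h_mem x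
      · intro hx
        refine ⟨h_sub w hw hx, ?_⟩
        obtain ⟨k, -, rfl⟩ := Finset.mem_image.mp hx
        exact h_orb_iter k w
    rw [hset]
    exact h_card w hw
  rw [Finset.sum_congr rfl hfib, Finset.sum_const, smul_eq_mul]
  exact dvd_mul_left e _

private lemma fixcard_eq (e : ℕ) (he : e ∣ r) :
    Fixc a j r e = if (r / e) ∣ j then Ncnt a j e (j / (r / e)) else 0 := by
  classical
  have hrpos : 0 < r := Nat.pos_of_ne_zero (NeZero.ne r)
  have hepos : 0 < e := by
    rcases Nat.eq_zero_or_pos e with rfl | h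
    · rw [zero_dvd_iff] at he; omega
    · exact h
  have hq : 0 < r / e := Nat.div_pos (Nat.le_of_dvd hrpos he) hepos
  set blk : (ZMod r → Lt a j) → (Fin e → Lt a j) :=
    fun w t => w (((t : ℕ) : ZMod r)) with hblk
  set unblk : (Fin e → Lt a j) → (ZMod r → Lt a j) :=
    fun v x => v ⟨x.val % e, Nat.mod_lt _ hepos⟩ with hunblk
  have hfix_iff : ∀ w : ZMod r → Lt a j,
      ((shf a j r)^[e] w = w ↔ ∀ x, w (x + (e : ZMod r)) = w x) := by
    intro w
    constructor
    · intro h x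
      have hx := congrFun h x
      rwa [shf_iter] at hx
    · intro h
      funext x
      rw [shf_iter]
      exact h x
  have hB : ∀ v, ∀ x : ZMod r, unblk v (x + (e : ZMod r)) = unblk v x := by
    intro v x
    simp only [hunblk]
    congr 1
    apply Fin.ext
    show (x + (e : ZMod r)).val % e = x.val % e
    rw [ZMod.val_add, ZMod.val_natCast, Nat.mod_mod_of_dvd _ he, Nat.add_mod,
      Nat.mod_mod_of_dvd e he, Nat.mod_self, add_zero, Nat.mod_mod_of_dvd _ (dvd_refl e)]
  have hA : ∀ w : ZMod r → Lt a j, (∀ x, w (x + (e : ZMod r)) = w x) →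
      unblk (blk w) = w := by
    intro w hfix
    have hper : ∀ (k : ℕ) (x : ZMod r), w (x + ((e * k : ℕ) : ZMod r)) = w x := by
      intro k
      induction k with
      | zero => intro x; simp
      | succ k ih =>
        intro x
        have hc : ((e * (k + 1) : ℕ) : ZMod r) = (e : ZMod r) + ((e * k : ℕ) : ZMod r) := by
          push_cast; ring
        rw [hc, ← add_assoc, ih (x + (e : ZMod r)), hfix x]
    funext x
    simp only [hunblk, hblk]
    show w (((x.val % e : ℕ) : ZMod r)) = w x
    have hx : x = ((x.val % e : ℕ) : ZMod r) + ((e * (x.val / e) : ℕ) : ZMod r) := by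
      have hc : ((x.val % e : ℕ) : ZMod r) + ((e * (x.val / e) : ℕ) : ZMod r)
          = ((x.val % e + e * (x.val / e) : ℕ) : ZMod r) := by push_cast; ring
      rw [hc]
      have hval : x.val % e + e * (x.val / e) = x.val := by
        have := Nat.div_add_mod x.val e
        omega
      rw [hval, ZMod.natCast_rightInverse x]
    conv_rhs => rw [hx]
    rw [hper (x.val / e) (((x.val % e : ℕ) : ZMod r))]
  have hC : ∀ v, blk (unblk v) = v := by
    intro v
    funext t
    simp only [hblk, hunblk]
    congr 1
    apply Fin.ext
    show ((t : ℕ) : ZMod r).val % e = (t : ℕ)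
    rw [ZMod.val_natCast]
    have h1 : (t : ℕ) < e := t.isLt
    have h2 : (t : ℕ) < r := lt_of_lt_of_le h1 (Nat.le_of_dvd hrpos he)
    rw [Nat.mod_eq_of_lt h2, Nat.mod_eq_of_lt h1]
  have hsum_blk : ∀ v : Fin e → Lt a j,
      wsum a j (unblk v) = (r / e) * wsum a j v := by
    intro v
    simp only [wsum]
    have step1 : ∑ x : ZMod r, wgt a j (unblk v x)
        = ∑ k ∈ Finset.range r, wgt a j (unblk v ((k : ZMod r))) := by
      refine Finset.sum_nbij' (fun x => x.val) (fun k => (k : ZMod r)) ?_ ?_ ?_ ?_ ?_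
      · intro x _; exact Finset.mem_range.mpr (ZMod.val_lt x)
      · intro k _; exact Finset.mem_univ _
      · intro x _; exact ZMod.natCast_rightInverse x
      · intro k hk; exact ZMod.val_natCast_of_lt (Finset.mem_range.mp hk)
      · intro x _; rw [ZMod.natCast_rightInverse x]
    rw [step1]
    have step2 : ∀ k ∈ Finset.range r, wgt a j (unblk v ((k : ZMod r)))
        = wgt a j (v ⟨k % e, Nat.mod_lt _ hepos⟩) := by
      intro k _
      simp only [hunblk]
      congr 2
      apply Fin.ext
      show ((k : ZMod r)).val % e = k % e
      rw [ZMod.val_natCast, Nat.mod_mod_of_dvd _ he]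
    rw [Finset.sum_congr rfl step2]
    have hre : r = e * (r / e) := (Nat.mul_div_cancel' he).symm
    have hper : ∀ q : ℕ, ∑ k ∈ Finset.range (e * q),
        wgt a j (v ⟨k % e, Nat.mod_lt _ hepos⟩)
        = q * ∑ t ∈ Finset.range e, wgt a j (v ⟨t % e, Nat.mod_lt _ hepos⟩) := by
      intro q
      induction q with
      | zero => simp
      | succ q ih =>
        have hq1 : e * (q + 1) = e * q + e := by ring
        rw [hq1, Finset.sum_range_add, ih]
        have hsh : ∀ i ∈ Finset.range e,
            wgt a j (v ⟨(e * q + i) % e, Nat.mod_lt _ hepos⟩)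
            = wgt a j (v ⟨i % e, Nat.mod_lt _ hepos⟩) := by
          intro i _
          congr 2
          apply Fin.ext
          show (e * q + i) % e = i % e
          exact Nat.mul_add_mod e q i
        rw [Finset.sum_congr rfl hsh]
        ring
    conv_lhs => rw [hre]
    rw [hper (r / e)]
    congr 1
    rw [← Fin.sum_univ_eq_sum_range (fun t => wgt a j (v ⟨t % e, Nat.mod_lt _ hepos⟩)) e]
    refine Finset.sum_congr rfl fun t _ => ?_
    congr 2
    apply Fin.ext
    show (t : ℕ) % e = (t : ℕ)
    exact Nat.mod_eq_of_lt t.isLt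
  by_cases hdvd : (r / e) ∣ j
  · rw [if_pos hdvd]
    rw [show Fixc a j r e = (Finset.univ.filter fun w : ZMod r → Lt a j =>
        (shf a j r)^[e] w = w ∧ wsum a j w = j).card from rfl]
    rw [show Ncnt a j e (j / (r / e)) = (Finset.univ.filter fun v : Fin e → Lt a j =>
        wsum a j v = j / (r / e)).card from rfl]
    apply Finset.card_bij' (i := fun w _ => blk w) (j := fun v _ => unblk v)
    · intro w hw
      simp only [Finset.mem_filter, Finset.mem_univ, true_and] at hw ⊢
      obtain ⟨hfix, hsum⟩ := hw
      have hw' : unblk (blk w) = w := hA w ((hfix_iff w).mp hfix)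
      have hj' := hsum_blk (blk w)
      rw [hw'] at hj'
      rw [hsum] at hj'
      rw [mul_comm] at hj'
      exact (Nat.div_eq_of_eq_mul_left hq hj').symm
    · intro v hv
      simp only [Finset.mem_filter, Finset.mem_univ, true_and] at hv ⊢
      constructor
      · exact (hfix_iff (unblk v)).mpr (hB v)
      · rw [hsum_blk v, hv, Nat.mul_div_cancel' hdvd]
    · intro w hw
      simp only [Finset.mem_filter, Finset.mem_univ, true_and] at hw
      exact hA w ((hfix_iff w).mp hw.1)
    · intro v _
      exact hC v
  · rw [if_neg hdvd]
    rw [show Fixc a j r e = (Finset.univ.filter fun w : ZMod r → Lt a j =>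
        (shf a j r)^[e] w = w ∧ wsum a j w = j).card from rfl]
    rw [Finset.card_eq_zero, Finset.filter_eq_empty_iff]
    intro w _
    rintro ⟨hfix, hsum⟩
    apply hdvd
    have hw' : unblk (blk w) = w := hA w ((hfix_iff w).mp hfix)
    have hj' := hsum_blk (blk w)
    rw [hw'] at hj'
    rw [hsum] at hj'
    exact ⟨wsum a j (blk w), hj'⟩

end Words

/-! ### Power series lemmas for `expandPS` -/

/-- Substitution of `z^d` into a formal power series: `expandPS d f = f(z^d)`. -/
noncomputable def expandPS (d : ℕ) (f : PowerSeries ℚ) : PowerSeries ℚ :=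
  PowerSeries.mk fun j => if d ∣ j then PowerSeries.coeff (j / d) f else 0

private lemma coeff_expandPS (d k : ℕ) (f : PowerSeries ℚ) :
    PowerSeries.coeff k (expandPS d f)
      = if d ∣ k then PowerSeries.coeff (k / d) f else 0 := by
  rw [expandPS, PowerSeries.coeff_mk]

private lemma expandPS_one (d : ℕ) (hd : d ≠ 0) : expandPS d 1 = 1 := by
  ext k
  rw [coeff_expandPS]
  by_cases h : d ∣ k
  · rw [if_pos h, PowerSeries.coeff_one, PowerSeries.coeff_one]
    have hiff : k / d = 0 ↔ k = 0 := by
      obtain ⟨c, rfl⟩ := h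
      rw [Nat.mul_div_cancel_left _ (Nat.pos_of_ne_zero hd), Nat.mul_eq_zero]
      simp [hd]
    simp only [hiff]
  · rw [if_neg h, PowerSeries.coeff_one, if_neg, eq_comm]
    rintro rfl
    exact h (dvd_zero d)

private lemma expandPS_mul (d : ℕ) (hd : d ≠ 0) (f g : PowerSeries ℚ) :
    expandPS d (f * g) = expandPS d f * expandPS d g := by
  ext k
  rw [coeff_expandPS, PowerSeries.coeff_mul k (expandPS d f) (expandPS d g)]
  have hterm : ∀ pq ∈ Finset.HasAntidiagonal.antidiagonal k,
      PowerSeries.coeff pq.1 (expandPS d f) * PowerSeries.coeff pq.2 (expandPS d g)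
      = if d ∣ pq.1 ∧ d ∣ pq.2
          then PowerSeries.coeff (pq.1 / d) f * PowerSeries.coeff (pq.2 / d) g else 0 := by
    intro pq _
    rw [coeff_expandPS, coeff_expandPS]
    by_cases h1 : d ∣ pq.1 <;> by_cases h2 : d ∣ pq.2 <;> simp [h1, h2]
  rw [Finset.sum_congr rfl hterm, ← Finset.sum_filter]
  by_cases hk : d ∣ k
  · rw [if_pos hk, PowerSeries.coeff_mul]
    refine Finset.sum_nbij' (fun pq : ℕ × ℕ => (d * pq.1, d * pq.2))
      (fun pq : ℕ × ℕ => (pq.1 / d, pq.2 / d)) ?_ ?_ ?_ ?_ ?_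
    · intro pq hpq
      have hmem := Finset.HasAntidiagonal.mem_antidiagonal.mp hpq
      rw [Finset.mem_filter, Finset.HasAntidiagonal.mem_antidiagonal]
      refine ⟨?_, ⟨Dvd.intro _ rfl, Dvd.intro _ rfl⟩⟩
      show d * pq.1 + d * pq.2 = k
      rw [← Nat.mul_add, hmem, Nat.mul_div_cancel' hk]
    · intro pq hpq
      obtain ⟨hmem, h1, h2⟩ := Finset.mem_filter.mp hpq
      have hsum := Finset.HasAntidiagonal.mem_antidiagonal.mp hmem
      rw [Finset.HasAntidiagonal.mem_antidiagonal]
      show pq.1 / d + pq.2 / d = k / d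
      obtain ⟨c1, hc1⟩ := h1
      obtain ⟨c2, hc2⟩ := h2
      have hk2 : k = d * (c1 + c2) := by rw [← hsum, hc1, hc2]; ring
      rw [hc1, hc2, hk2, Nat.mul_div_cancel_left _ (Nat.pos_of_ne_zero hd),
        Nat.mul_div_cancel_left _ (Nat.pos_of_ne_zero hd),
        Nat.mul_div_cancel_left _ (Nat.pos_of_ne_zero hd)]
    · intro pq _
      show (d * pq.1 / d, d * pq.2 / d) = pq
      rw [Nat.mul_div_cancel_left _ (Nat.pos_of_ne_zero hd),
        Nat.mul_div_cancel_left _ (Nat.pos_of_ne_zero hd)]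
    · intro pq hpq
      obtain ⟨-, h1, h2⟩ := Finset.mem_filter.mp hpq
      show (d * (pq.1 / d), d * (pq.2 / d)) = pq
      rw [Nat.mul_div_cancel' h1, Nat.mul_div_cancel' h2]
    · intro pq _
      show PowerSeries.coeff pq.1 f * PowerSeries.coeff pq.2 g
        = PowerSeries.coeff (d * pq.1 / d) f * PowerSeries.coeff (d * pq.2 / d) g
      rw [Nat.mul_div_cancel_left _ (Nat.pos_of_ne_zero hd),
        Nat.mul_div_cancel_left _ (Nat.pos_of_ne_zero hd)]
  · rw [if_neg hk]
    refine (Finset.sum_eq_zero fun pq hpq => ?_).symm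
    obtain ⟨hmem, h1, h2⟩ := Finset.mem_filter.mp hpq
    have hsum := Finset.HasAntidiagonal.mem_antidiagonal.mp hmem
    exact absurd (hsum ▸ Nat.dvd_add h1 h2) hk

private lemma expandPS_pow (d : ℕ) (hd : d ≠ 0) (f : PowerSeries ℚ) (m : ℕ) :
    (expandPS d f) ^ m = expandPS d (f ^ m) := by
  induction m with
  | zero => rw [pow_zero, pow_zero, expandPS_one d hd]
  | succ m ih => rw [pow_succ, pow_succ, ih, ← expandPS_mul d hd]

private lemma expandPS_neg (d : ℕ) (f : PowerSeries ℚ) :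
    expandPS d (-f) = -(expandPS d f) := by
  ext k
  rw [map_neg, coeff_expandPS, coeff_expandPS, map_neg]
  split <;> simp

/-- The Witt transform `W_f^{(r)}(z) = (1/r) ∑_{d ∣ r} μ(d) f(z^d)^{r/d}`;
its `j`-th coefficient is `m_f(j, r)`. -/
noncomputable def witt (f : PowerSeries ℚ) (r : ℕ) : PowerSeries ℚ :=
  (1 / (r : ℚ)) • ∑ d ∈ r.divisors,
    ((ArithmeticFunction.moebius d : ℤ) : ℚ) • (expandPS d f) ^ (r / d)

/-- If `f ∈ ℤ[[z]]` has non-negative coefficients and `r ≥ 1`, then all coefficients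
of `W_f^{(r)}` and all coefficients of `(-1)^r W_{-f}^{(r)}` are non-negative
integers. -/
theorem witt_coeff_nonneg_int (f : PowerSeries ℚ)
    (hf : ∀ j, ∃ n : ℕ, PowerSeries.coeff j f = n) (r : ℕ) (hr : 1 ≤ r) :
    ∀ j, (∃ n : ℕ, PowerSeries.coeff j (witt f r) = n) ∧
      (∃ n : ℕ, PowerSeries.coeff j ((-1 : ℚ) ^ r • witt (-f) r) = n) := by
  have hrne : r ≠ 0 := by omega
  haveI : NeZero r := ⟨hrne⟩
  have hrQ : (r : ℚ) ≠ 0 := by exact_mod_cast hrne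
  choose a ha using hf
  intro j
  have hw : ∀ g : PowerSeries ℚ, PowerSeries.coeff j (witt g r)
      = (1 / (r : ℚ)) * ∑ d ∈ r.divisors,
        ((ArithmeticFunction.moebius d : ℤ) : ℚ)
          * PowerSeries.coeff j ((expandPS d g) ^ (r / d)) := by
    intro g
    rw [witt, PowerSeries.coeff_smul, map_sum, smul_eq_mul]
    congr 1
  have hcoeff : ∀ d ∈ r.divisors, PowerSeries.coeff j ((expandPS d f) ^ (r / d))
      = ((Fixc a j r (r / d) : ℕ) : ℚ) := by
    intro d hd
    obtain ⟨hdr, -⟩ := Nat.mem_divisors.mp hd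
    have hd0 : d ≠ 0 := by rintro rfl; exact hrne (zero_dvd_iff.mp hdr)
    rw [expandPS_pow d hd0, coeff_expandPS, fixcard_eq a j r (r / d) (Nat.div_dvd_of_dvd hdr),
      Nat.div_div_self hdr hrne]
    by_cases hjd : d ∣ j
    · rw [if_pos hjd, if_pos hjd, countF a j f ha (r / d) (j / d) (Nat.div_le_self j d)]
    · rw [if_neg hjd, if_neg hjd]; norm_num
  have hcoeffneg : ∀ d ∈ r.divisors, PowerSeries.coeff j ((expandPS d (-f)) ^ (r / d))
      = (-1 : ℚ) ^ (r / d) * ((Fixc a j r (r / d) : ℕ) : ℚ) := by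
    intro d hd
    rw [expandPS_neg, ← hcoeff d hd]
    rcases Nat.even_or_odd (r / d) with hpar | hpar
    · rw [hpar.neg_pow, hpar.neg_one_pow, one_mul]
    · rw [hpar.neg_pow, hpar.neg_one_pow, map_neg, neg_one_mul]
  constructor
  · -- part 1
    obtain ⟨k, hk⟩ := key3 a j r r
    refine ⟨k, ?_⟩
    rw [hw f, Finset.sum_congr rfl (fun d hd => by rw [hcoeff d hd])]
    have h2 : ∑ d ∈ r.divisors, ((ArithmeticFunction.moebius d : ℤ) : ℚ)
        * ((Fixc a j r (r / d) : ℕ) : ℚ) = ((Qc a j r r : ℕ) : ℚ) := by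
      have h1 := key1 a j r hrne
      have h1' := congrArg (fun z : ℤ => (z : ℚ)) h1
      push_cast at h1'
      exact h1'
    rw [h2, hk]
    push_cast
    rw [one_div, inv_mul_cancel_left₀ hrQ]
  · -- part 2
    have hT : r ∣ (Qc a j r r + if r % 4 = 2 then 2 * Qc a j r (r / 2) else 0) := by
      apply Nat.dvd_add (key3 a j r r)
      by_cases h42 : r % 4 = 2
      · rw [if_pos h42]
        obtain ⟨c, hc⟩ := key3 a j r (r / 2)
        refine ⟨c, ?_⟩
        rw [hc, ← Nat.mul_assoc]
        congr 1
        omega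
      · rw [if_neg h42]; exact dvd_zero r
    obtain ⟨k, hk⟩ := hT
    refine ⟨k, ?_⟩
    rw [PowerSeries.coeff_smul, smul_eq_mul, hw (-f),
      Finset.sum_congr rfl (fun d hd => by rw [hcoeffneg d hd])]
    have heq : (-1 : ℚ) ^ r * ((1 / (r : ℚ)) * ∑ d ∈ r.divisors,
        ((ArithmeticFunction.moebius d : ℤ) : ℚ)
          * ((-1 : ℚ) ^ (r / d) * ((Fixc a j r (r / d) : ℕ) : ℚ)))
        = (1 / (r : ℚ)) * (((Qc a j r r : ℤ)
            + (if r % 4 = 2 then 2 * (Qc a j r (r / 2) : ℤ) else 0) : ℤ) : ℚ) := by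
      rw [← key2 a j r hrne]
      push_cast
      rw [Finset.mul_sum, Finset.mul_sum, Finset.mul_sum]
      refine Finset.sum_congr rfl fun d _ => ?_
      rw [pow_add]
      ring
    rw [heq]
    have hcast : (((Qc a j r r : ℤ))
        + (if r % 4 = 2 then 2 * ((Qc a j r (r / 2) : ℤ)) else 0) : ℤ)
        = (((Qc a j r r + if r % 4 = 2 then 2 * Qc a j r (r / 2) else 0 : ℕ) : ℤ)) := by
      push_cast
      split <;> simp
    rw [hcast, hk]
    push_cast
    rw [one_div, inv_mul_cancel_left₀ hrQ]
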